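/- Let $A \in \mathbb{R}^{n\times n}$, $B \in \mathbb{R}^{n\times m}$, $\hat{A} \in \mathbb{R}^{r\times r}$, $\tau > 0$, $\hat{V}, \hat{W} \in \mathbb{R}^{n\times r}$ with $\hat{W}^T\hat{V} = I$, $\bar{P}_\tau, \bar{Q} \in \mathbb{R}^{n\times r}$, and $\hat{P}_\tau, \hat{Q} \in \mathbb{R}^{r\times r}$ with $\hat{Q}$ symmetric. Set $\hat{B} = \hat{W}^T B$, $Z_\tau = \tau(\hat{Q}\exp(\tau\hat{A})\hat{B}\hat{B}^T\exp(\tau\hat{A})^T - \bar{Q}^T\exp(\tau A)B\hat{B}^T\exp(\tau\hat{A})^T)$ and $X_\tau = Z_\tau + \exp(\tau\hat{A})^T\bar{Q}^T\exp(\tau A)\bar{P}_\tau - \exp(\tau\hat{A})^T\hat{Q}\exp(\tau\hat{A})\hat{P}_\tau$. If $\exp(\tau A) = \hat{V}\exp(\tau\hat{A})\hat{W}^T$, $\bar{Q} = \hat{W}\hat{Q}$, and $\bar{P}_\tau = \hat{V}\hat{P}_\tau$, then $Z_\tau = 0$ and $X_\tau = 0$. -/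

import Mathlib

open Matrix NormedSpace

/-- **Section 4.1 claim (time-limited case).** The deviation `Xτ` in the time-limited
optimality condition (b1) vanishes when the oblique projection exactly reproduces the
matrix exponential and the standard cross gramian, i.e. when
`exp(τA) = V̂ exp(τÂ) Ŵᵀ`, `Q̄ = Ŵ Q̂`, and `P̄τ = V̂ P̂τ`. -/
theorem time_limited_deviation_vanishes
    {n m r : ℕ}
    (A : Matrix (Fin n) (Fin n) ℝ)
    (B : Matrix (Fin n) (Fin m) ℝ)
    (Ahat : Matrix (Fin r) (Fin r) ℝ)
    (τ : ℝ) (hτ : 0 < τ)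
    (V W : Matrix (Fin n) (Fin r) ℝ)
    (hWV : Wᵀ * V = 1)
    (Pbartau Qbar : Matrix (Fin n) (Fin r) ℝ)
    (Phattau Qhat : Matrix (Fin r) (Fin r) ℝ)
    (hQhatsymm : Qhatᵀ = Qhat)
    (Bhat : Matrix (Fin r) (Fin m) ℝ) (hBhat : Bhat = Wᵀ * B)
    (Ztau : Matrix (Fin r) (Fin r) ℝ)
    (hZtau : Ztau = τ • (Qhat * exp (τ • Ahat) * Bhat * Bhatᵀ * (exp (τ • Ahat))ᵀ -
      Qbarᵀ * exp (τ • A) * B * Bhatᵀ * (exp (τ • Ahat))ᵀ))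
    (Xtau : Matrix (Fin r) (Fin r) ℝ)
    (hXtau : Xtau = Ztau + (exp (τ • Ahat))ᵀ * Qbarᵀ * exp (τ • A) * Pbartau -
      (exp (τ • Ahat))ᵀ * Qhat * exp (τ • Ahat) * Phattau)
    (hexp : exp (τ • A) = V * exp (τ • Ahat) * Wᵀ)
    (hQbar : Qbar = W * Qhat)
    (hPbartau : Pbartau = V * Phattau) :
    Ztau = 0 ∧ Xtau = 0 := by
  have hkey : ∀ {k : ℕ} (X : Matrix (Fin r) (Fin k) ℝ), Wᵀ * (V * X) = X := by
    intro k X; rw [← Matrix.mul_assoc, hWV, Matrix.one_mul]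
  have hZ : Ztau = 0 := by
    rw [hZtau, hexp, hQbar, hBhat]
    simp only [Matrix.transpose_mul, hQhatsymm, Matrix.mul_assoc, hkey]
    simp
  refine ⟨hZ, ?_⟩
  rw [hXtau, hZ, hexp, hQbar, hPbartau]
  simp only [Matrix.transpose_mul, hQhatsymm, Matrix.mul_assoc, hkey]
  simp
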